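/- Let t ≥ 2 and let k_1 < k_2 < ... < k_t be odd natural numbers. Then z = -1 is a simple root of χ_S(x) = t·x^{k_t} + ∑_{i=1}^{t-1} x^{k_t - k_i} + 1; more precisely, χ_S(-1) = 0 and χ_S'(-1) = k_1 + k_2 + ... + k_t ≠ 0. -/

import Mathlib

theorem stmt11 (t : ℕ) (ht : 2 ≤ t) (k : ℕ → ℕ)
    (hmono : ∀ i j, 1 ≤ i → i < j → j ≤ t → k i < k j)
    (hodd : ∀ i, 1 ≤ i → i ≤ t → Odd (k i)) :
    ((t : ℂ) * (-1 : ℂ) ^ (k t) + (∑ i ∈ Finset.Icc 1 (t - 1), (-1 : ℂ) ^ (k t - k i)) + 1 = 0) ∧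
    ((t : ℂ) * (k t : ℂ) * (-1 : ℂ) ^ (k t - 1) +
        ∑ i ∈ Finset.Icc 1 (t - 1), ((k t - k i : ℕ) : ℂ) * (-1 : ℂ) ^ (k t - k i - 1) =
      ∑ i ∈ Finset.Icc 1 t, (k i : ℂ)) ∧
    (∑ i ∈ Finset.Icc 1 t, k i) ≠ 0 := by
  have hktodd : Odd (k t) := hodd t (by omega) le_rfl
  have hlt : ∀ i ∈ Finset.Icc 1 (t - 1), k i < k t := by
    intro i hi
    simp only [Finset.mem_Icc] at hi
    exact hmono i t hi.1 (by omega) le_rfl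
  have heven : ∀ i ∈ Finset.Icc 1 (t - 1), Even (k t - k i) := by
    intro i hi
    simp only [Finset.mem_Icc] at hi
    exact Nat.Odd.sub_odd hktodd (hodd i hi.1 (by omega))
  refine ⟨?_, ?_, ?_⟩
  · rw [Odd.neg_one_pow hktodd, Finset.sum_congr rfl
      (fun i hi => Even.neg_one_pow (heven i hi))]
    rw [Finset.sum_const, Nat.card_Icc]
    simp only [Nat.add_sub_cancel, nsmul_eq_mul, mul_one]
    rw [Nat.cast_sub (by omega : 1 ≤ t)]
    ring
  · have h1 : (-1 : ℂ) ^ (k t - 1) = 1 :=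
      Even.neg_one_pow (Nat.Odd.sub_odd hktodd odd_one)
    have h2 : ∀ i ∈ Finset.Icc 1 (t - 1),
        ((k t - k i : ℕ) : ℂ) * (-1 : ℂ) ^ (k t - k i - 1)
          = (k i : ℂ) - (k t : ℂ) := by
      intro i hi
      have hlt' := hlt i hi
      have hodd' : Odd (k t - k i - 1) :=
        Nat.Even.sub_odd (by omega) (heven i hi) odd_one
      rw [Odd.neg_one_pow hodd', Nat.cast_sub hlt'.le]
      ring
    rw [h1, Finset.sum_congr rfl h2]
    have ht' : t = (t - 1) + 1 := by omega
    rw [Finset.sum_sub_distrib, Finset.sum_const, Nat.card_Icc]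
    rw [ht', Finset.sum_Icc_succ_top (by omega : 1 ≤ t - 1 + 1)]
    rw [← ht']
    simp only [Nat.add_sub_cancel, nsmul_eq_mul, mul_one]
    rw [Nat.cast_sub (by omega : 1 ≤ t)]
    ring
  · have h1 : 1 ∈ Finset.Icc 1 t := by simp; omega
    have hk1 : 0 < k 1 := (hodd 1 le_rfl (by omega)).pos
    intro h
    have := Finset.sum_eq_zero_iff.mp h 1 h1
    omega
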